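/- Let G be a P̂₄-free graph and let u₀, u₁, u₂, u₃ be four pairwise adjacent vertices of G, with S = {u₀, u₁, u₂, u₃}. Set Xᵢ = N(uᵢ) \ S for 0 ≤ i ≤ 3. Then the sets X₀, X₁, X₂, X₃ are pairwise disjoint. -/

import Mathlib

/-- `H` is contained in `G` as a (not necessarily induced) subgraph:
there is an injective map of vertices carrying edges of `H` to edges of `G`. -/
def Contains {α β : Type*} (H : SimpleGraph α) (G : SimpleGraph β) : Prop :=
  ∃ f : α → β, Function.Injective f ∧ ∀ ⦃a b⦄, H.Adj a b → G.Adj (f a) (f b)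

/-- The suspension `P̂₄` of the path on 4 vertices: a new apex vertex `none`
is joined to all four vertices of `P₄`. -/
def hatP4 : SimpleGraph (Option (Fin 4)) :=
  SimpleGraph.fromRel (fun a b =>
    (∃ i j, a = some i ∧ b = some j ∧ (SimpleGraph.pathGraph 4).Adj i j) ∨ a = none)

/-- The number of triangles (3-cliques) of a graph. -/
noncomputable def triangleCount {V : Type*} (G : SimpleGraph V) : ℕ :=
  (G.cliqueSet 3).ncard

/-- If `G` is `P̂₄`-free and `u 0, u 1, u 2, u 3` are pairwise adjacent, with
`S` their vertex set and `Xᵢ = N(uᵢ) \ S`, then the `Xᵢ` are pairwise disjoint. -/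
lemma exists_kl : ∀ i j : Fin 4, i ≠ j → ∃ k l : Fin 4,
    k ≠ i ∧ k ≠ j ∧ l ≠ i ∧ l ≠ j ∧ k ≠ l := by decide

theorem stmt_13 {V : Type} (G : SimpleGraph V) (hfree : ¬ Contains hatP4 G)
    (u : Fin 4 → V) (hadj : ∀ i j : Fin 4, i ≠ j → G.Adj (u i) (u j)) :
    ∀ i j : Fin 4, i ≠ j →
      Disjoint (G.neighborSet (u i) \ Set.range u)
        (G.neighborSet (u j) \ Set.range u) := by
  intro i j hij
  rw [Set.disjoint_left]
  rintro x ⟨hxi, hxS⟩ ⟨hxj, _⟩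
  obtain ⟨k, l, hki, hkj, hli, hlj, hkl⟩ := exists_kl i j hij
  have hx : ∀ m : Fin 4, x ≠ u m := fun m h => hxS ⟨m, h.symm⟩
  have n0 := hx i; have n1 := hx j; have n2 := hx k; have n3 := hx l
  have n4 : u i ≠ u j := (hadj i j hij).ne
  have n5 : u i ≠ u k := (hadj i k (Ne.symm hki)).ne
  have n6 : u i ≠ u l := (hadj i l (Ne.symm hli)).ne
  have n7 : u j ≠ u k := (hadj j k (Ne.symm hkj)).ne
  have n8 : u j ≠ u l := (hadj j l (Ne.symm hlj)).ne
  have n9 : u k ≠ u l := (hadj k l hkl).ne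
  apply hfree
  refine ⟨fun o => Option.rec (u i) (![x, u j, u k, u l]) o, ?_, ?_⟩
  · rintro (_|m) (_|n) h
    · rfl
    · exfalso; fin_cases n <;> simp_all
    · exfalso; fin_cases m <;> simp_all
    · congr 1
      by_contra hmn
      fin_cases m <;> fin_cases n <;> simp_all
  · rintro (_|m) (_|n) hab
    · exact (hatP4.loopless.irrefl _ hab).elim
    · fin_cases n
      · exact hxi
      · exact hadj i j hij
      · exact hadj i k (Ne.symm hki)
      · exact hadj i l (Ne.symm hli)
    · fin_cases m
      · exact hxi.symm
      · exact (hadj i j hij).symm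
      · exact (hadj i k (Ne.symm hki)).symm
      · exact (hadj i l (Ne.symm hli)).symm
    · simp only [hatP4, SimpleGraph.fromRel_adj] at hab
      obtain ⟨hne, h⟩ := hab
      have hmn : (SimpleGraph.pathGraph 4).Adj m n := by
        rcases h with (⟨a, b, ha, hb, hab⟩ | h) | (⟨a, b, ha, hb, hab⟩ | h)
        · obtain rfl := Option.some.inj ha
          obtain rfl := Option.some.inj hb
          exact hab
        · exact absurd h (by simp)
        · obtain rfl := Option.some.inj ha
          obtain rfl := Option.some.inj hb
          exact hab.symm
        · exact absurd h (by simp)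
      rw [SimpleGraph.pathGraph_adj] at hmn
      fin_cases m <;> fin_cases n <;> simp only [Fin.isValue] at hmn ⊢ <;>
        first
        | (exfalso; revert hmn; decide)
        | exact hxj.symm
        | exact hxj
        | exact hadj j k (Ne.symm hkj)
        | exact (hadj j k (Ne.symm hkj)).symm
        | exact hadj k l hkl
        | exact (hadj k l hkl).symm
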